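/- Let $(E,A)$ be a regular matrix pencil and suppose $S_1, T_1$ and $S_2, T_2$ are two pairs of nonsingular matrices putting $(E,A)$ into Weierstraß-type form with nilpotent blocks $N_1$ and $N_2$ respectively (i.e. $S_i E T_i = \operatorname{diag}(I_{d_i}, N_i)$, $S_i A T_i = \operatorname{diag}(J_i, I_{n-d_i})$ with $N_i$ nilpotent). Then $d_1 = d_2$ and the indices of nilpotency of $N_1$ and $N_2$ coincide. -/
import Mathlib


/-- The polynomial `s ↦ det (s E - A)` of a matrix pencil. -/
noncomputable def pencilPoly {m : Type*} [Fintype m] [DecidableEq m]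
    (E A : Matrix m m ℝ) : Polynomial ℝ :=
  ((Polynomial.X : Polynomial ℝ) • E.map Polynomial.C - A.map Polynomial.C).det

open Polynomial Matrix

lemma nilp_pow_size {m : ℕ} (N : Matrix (Fin m) (Fin m) ℝ) (h : IsNilpotent N) :
    N ^ m = 0 := by
  have h2 : N.charpoly = Polynomial.X ^ m := by
    have h1 := Matrix.isNilpotent_charpoly_sub_pow_of_isNilpotent h
    rw [← sub_eq_zero]
    simpa using h1.eq_zero
  have h3 := N.aeval_self_charpoly
  rw [h2] at h3
  simpa using h3

lemma fromBlocks_pow {a b : ℕ} (B : Matrix (Fin a) (Fin a) ℝ) (C : Matrix (Fin b) (Fin b) ℝ)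
    (k : ℕ) : (Matrix.fromBlocks B 0 0 C) ^ k = Matrix.fromBlocks (B ^ k) 0 0 (C ^ k) := by
  induction k with
  | zero => simp [Matrix.fromBlocks_one]
  | succ k ih =>
      rw [pow_succ, pow_succ, pow_succ, ih, Matrix.fromBlocks_multiply]
      simp

/-- Index part: `N ^ k = 0` is equivalent to a property of the pencil only. -/
lemma pencil_index (n d : ℕ) (E A : Matrix (Fin n) (Fin n) ℝ) (c : ℝ)
    (hc : IsUnit (c • E - A).det)
    (S T : Matrix (Fin n) (Fin n) ℝ) (e : Fin n ≃ (Fin d ⊕ Fin (n - d)))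
    (J : Matrix (Fin d) (Fin d) ℝ) (N : Matrix (Fin (n - d)) (Fin (n - d)) ℝ)
    (hS : IsUnit S) (hT : IsUnit T) (hN : IsNilpotent N) (hd : d ≤ n)
    (hE : (S * E * T).submatrix e.symm e.symm = Matrix.fromBlocks 1 0 0 N)
    (hA : (S * A * T).submatrix e.symm e.symm = Matrix.fromBlocks J 0 0 1) (k : ℕ) :
    (N ^ k = 0 ↔ ∃ Y, ((c • E - A)⁻¹ * E) ^ k = ((c • E - A)⁻¹ * E) ^ n * Y) := by
  classical
  have hSdet : IsUnit S.det := (Matrix.isUnit_iff_isUnit_det S).mp hS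
  have hTdet : IsUnit T.det := (Matrix.isUnit_iff_isUnit_det T).mp hT
  set ψ := Matrix.reindexAlgEquiv ℝ ℝ e with hψ
  have hψ_apply : ∀ M : Matrix (Fin n) (Fin n) ℝ, ψ M = M.submatrix ⇑e.symm ⇑e.symm :=
    fun M => rfl
  set Kb : Matrix (Fin d) (Fin d) ℝ := c • 1 - J with hKb
  set Nb : Matrix (Fin (n-d)) (Fin (n-d)) ℝ := c • N - 1 with hNb
  set G : Matrix (Fin n) (Fin n) ℝ := S * (c • E - A) * T with hG
  set F : Matrix (Fin n) (Fin n) ℝ := S * E * T with hF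
  have hG' : ψ G = Matrix.fromBlocks Kb 0 0 Nb := by
    have h1 : G = c • (S * E * T) - S * A * T := by
      rw [hG]; rw [Matrix.mul_sub, Matrix.sub_mul]; rw [Matrix.mul_smul, Matrix.smul_mul]
    rw [hψ_apply, h1]
    have hrfl : (c • (S * E * T) - S * A * T).submatrix ⇑e.symm ⇑e.symm
        = c • (S * E * T).submatrix ⇑e.symm ⇑e.symm - (S * A * T).submatrix ⇑e.symm ⇑e.symm :=
      rfl
    rw [hrfl, hE, hA, Matrix.fromBlocks_smul, sub_eq_add_neg, Matrix.fromBlocks_neg,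
      Matrix.fromBlocks_add]
    simp [hKb, hNb, sub_eq_add_neg]
  have hF' : ψ F = Matrix.fromBlocks 1 0 0 N := by rw [hψ_apply, hF, hE]
  -- Nb is a unit
  have hNbU : IsUnit Nb := by
    have : IsNilpotent (c • N) := hN.smul c
    simpa [hNb] using this.isUnit_sub_one
  have hNbdet : IsUnit Nb.det := (Matrix.isUnit_iff_isUnit_det Nb).mp hNbU
  -- Kb is a unit
  have hGdet : IsUnit G.det := by
    rw [hG, Matrix.det_mul, Matrix.det_mul]
    exact (hSdet.mul hc).mul hTdet
  have hG'det : IsUnit (Matrix.fromBlocks Kb 0 0 Nb).det := by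
    rw [← hG']
    rw [hψ_apply, Matrix.det_submatrix_equiv_self]
    exact hGdet
  have hKbdet : IsUnit Kb.det := by
    rw [Matrix.det_fromBlocks_zero₂₁] at hG'det
    exact (isUnit_of_mul_isUnit_left hG'det)
  -- the matrix Z and commutation facts
  set Z : Matrix (Fin (n-d)) (Fin (n-d)) ℝ := Nb⁻¹ * N with hZ
  have hcommNb : Commute Nb N := ((Commute.refl N).smul_left c).sub_left (Commute.one_left N)
  have hcomm : Commute Nb⁻¹ N := by
    have : Nb⁻¹ * N = Nb⁻¹ * N * (Nb * Nb⁻¹) := by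
      rw [Matrix.mul_nonsing_inv Nb hNbdet, mul_one]
    calc Nb⁻¹ * N = Nb⁻¹ * (N * Nb) * Nb⁻¹ := by
            rw [this]; noncomm_ring
      _ = Nb⁻¹ * (Nb * N) * Nb⁻¹ := by rw [hcommNb.symm.eq]
      _ = (Nb⁻¹ * Nb) * (N * Nb⁻¹) := by noncomm_ring
      _ = N * Nb⁻¹ := by rw [Matrix.nonsing_inv_mul Nb hNbdet, one_mul]
  -- Z ^ k vanishes iff N ^ k does
  have hZpow : ∀ j : ℕ, Z ^ j = (Nb⁻¹) ^ j * N ^ j := fun j => hcomm.mul_pow j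
  have hNbNbinv : Commute Nb Nb⁻¹ := by
    unfold Commute SemiconjBy
    rw [Matrix.mul_nonsing_inv Nb hNbdet, Matrix.nonsing_inv_mul Nb hNbdet]
  have hZiff : ∀ j : ℕ, (Z ^ j = 0 ↔ N ^ j = 0) := by
    intro j
    constructor
    · intro h
      have : Nb ^ j * Z ^ j = 0 := by rw [h, mul_zero]
      rwa [hZpow, ← mul_assoc, ← hNbNbinv.mul_pow, Matrix.mul_nonsing_inv Nb hNbdet,
        one_pow, one_mul] at this
    · intro h
      rw [hZpow, h, mul_zero]
  -- Z is nilpotent with Z ^ n = 0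
  have hNn : N ^ n = 0 := by
    have h1 : N ^ (n - d) = 0 := nilp_pow_size N hN
    calc N ^ n = N ^ (n - d) * N ^ (n - (n - d)) := by rw [← pow_add]; congr 1; omega
      _ = 0 := by rw [h1, zero_mul]
  have hZn : Z ^ n = 0 := (hZiff n).mpr hNn
  -- W is a two-sided inverse of G
  set W : Matrix (Fin n) (Fin n) ℝ := ψ.symm (Matrix.fromBlocks Kb⁻¹ 0 0 Nb⁻¹) with hW
  have hψW : ψ W = Matrix.fromBlocks Kb⁻¹ 0 0 Nb⁻¹ := by rw [hW]; exact ψ.apply_symm_apply _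
  have hGW : G * W = 1 := by
    apply ψ.injective
    rw [_root_.map_mul, hG', hψW, _root_.map_one, Matrix.fromBlocks_multiply]
    simp [Matrix.mul_nonsing_inv Kb hKbdet, Matrix.mul_nonsing_inv Nb hNbdet,
      Matrix.fromBlocks_one]
  -- the resolvent-type matrix M
  set M : Matrix (Fin n) (Fin n) ℝ := (c • E - A)⁻¹ * E with hM
  have hinv : (c • E - A)⁻¹ = T * W * S := by
    apply Matrix.inv_eq_right_inv
    have h0 : S * ((c • E - A) * (T * W * S)) = S := by
      calc S * ((c • E - A) * (T * W * S)) = (S * (c • E - A) * T) * W * S := by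
            simp only [Matrix.mul_assoc]
        _ = G * W * S := by rw [hG]
        _ = S := by rw [hGW, one_mul]
    have h1 := congrArg (fun X => S⁻¹ * X) h0
    simpa [Matrix.nonsing_inv_mul_cancel_left (A := S) _ hSdet,
      Matrix.nonsing_inv_mul S hSdet] using h1
  set Q : Matrix (Fin n) (Fin n) ℝ := W * F with hQ
  have hMQ : M = T * Q * T⁻¹ := by
    rw [hM, hinv, hQ, hF]
    have h2 := Matrix.mul_nonsing_inv_cancel_right (A := T) (T * W * (S * E)) hTdet
    calc T * W * S * E = T * W * (S * E) * T * T⁻¹ := by rw [h2]; simp only [Matrix.mul_assoc]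
      _ = T * (W * (S * E * T)) * T⁻¹ := by simp only [Matrix.mul_assoc]
  have hMpow : ∀ j : ℕ, M ^ j = T * Q ^ j * T⁻¹ := by
    intro j
    induction j with
    | zero => simp [Matrix.mul_nonsing_inv T hTdet]
    | succ j ih =>
        rw [pow_succ, pow_succ, ih, hMQ]
        calc T * Q ^ j * T⁻¹ * (T * Q * T⁻¹)
            = T * Q ^ j * (T⁻¹ * T) * Q * T⁻¹ := by simp only [Matrix.mul_assoc]
          _ = T * (Q ^ j * Q) * T⁻¹ := by
              rw [Matrix.nonsing_inv_mul T hTdet]; simp only [Matrix.mul_assoc, Matrix.mul_one,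
                Matrix.one_mul]
  have hψQ : ψ Q = Matrix.fromBlocks Kb⁻¹ 0 0 Z := by
    rw [hQ, _root_.map_mul, hψW, hF', Matrix.fromBlocks_multiply]
    simp [hZ]
  have hψQpow : ∀ j : ℕ, ψ (Q ^ j) = Matrix.fromBlocks (Kb⁻¹ ^ j) 0 0 (Z ^ j) := by
    intro j
    rw [_root_.map_pow, hψQ, fromBlocks_pow]
  have hKidet : IsUnit (Kb⁻¹ ^ n).det := by
    rw [Matrix.det_pow]
    exact (Matrix.isUnit_nonsing_inv_det Kb hKbdet).pow n
  have hconj : ∀ X : Matrix (Fin n) (Fin n) ℝ, T⁻¹ * (T * X * T⁻¹) * T = X := by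
    intro X
    calc T⁻¹ * (T * X * T⁻¹) * T = T⁻¹ * T * X * (T⁻¹ * T) := by simp only [Matrix.mul_assoc]
      _ = X := by rw [Matrix.nonsing_inv_mul T hTdet]; simp
  -- the key equivalence
  rw [← hZiff k]
  constructor
  · intro h
    refine ⟨T * ψ.symm (Matrix.fromBlocks ((Kb⁻¹ ^ n)⁻¹ * Kb⁻¹ ^ k) 0 0 0) * T⁻¹, ?_⟩
    have hQn : Q ^ n * ψ.symm (Matrix.fromBlocks ((Kb⁻¹ ^ n)⁻¹ * Kb⁻¹ ^ k) 0 0 0) = Q ^ k := by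
      apply ψ.injective
      rw [_root_.map_mul, hψQpow, ψ.apply_symm_apply, hψQpow, Matrix.fromBlocks_multiply, h, hZn]
      have hKidet' : IsUnit ((Kb ^ n)⁻¹).det := by
        apply Matrix.isUnit_nonsing_inv_det
        rw [Matrix.det_pow]
        exact hKbdet.pow n
      simp [Matrix.mul_nonsing_inv_cancel_left (A := (Kb ^ n)⁻¹) _ hKidet']
    rw [hMpow, hMpow]
    calc T * Q ^ k * T⁻¹
        = T * (Q ^ n * ψ.symm (Matrix.fromBlocks ((Kb⁻¹ ^ n)⁻¹ * Kb⁻¹ ^ k) 0 0 0)) * T⁻¹ := by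
          rw [hQn]
      _ = T * Q ^ n * (T⁻¹ * T) * ψ.symm (Matrix.fromBlocks ((Kb⁻¹ ^ n)⁻¹ * Kb⁻¹ ^ k) 0 0 0)
            * T⁻¹ := by
          rw [Matrix.nonsing_inv_mul T hTdet]; simp only [Matrix.mul_assoc, Matrix.mul_one,
            Matrix.one_mul]
      _ = T * Q ^ n * T⁻¹ * (T * ψ.symm (Matrix.fromBlocks ((Kb⁻¹ ^ n)⁻¹ * Kb⁻¹ ^ k) 0 0 0)
            * T⁻¹) := by simp only [Matrix.mul_assoc]
  · rintro ⟨Y, hY⟩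
    have hQk : Q ^ k = Q ^ n * (T⁻¹ * Y * T) := by
      have h1 := congrArg (fun X => T⁻¹ * X * T) hY
      simp only [hMpow] at h1
      calc Q ^ k = T⁻¹ * (T * Q ^ k * T⁻¹) * T := (hconj _).symm
        _ = T⁻¹ * (T * Q ^ n * T⁻¹ * Y) * T := h1
        _ = T⁻¹ * T * Q ^ n * (T⁻¹ * Y * T) := by simp only [Matrix.mul_assoc]
        _ = Q ^ n * (T⁻¹ * Y * T) := by
            rw [Matrix.nonsing_inv_mul T hTdet, Matrix.one_mul]
    have hQk2 : ψ (Q ^ k) = ψ (Q ^ n) * ψ (T⁻¹ * Y * T) := by rw [hQk, _root_.map_mul]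
    rw [hψQpow, hψQpow, hZn] at hQk2
    have h2 := congrArg Matrix.toBlocks₂₂ hQk2
    rw [← Matrix.fromBlocks_toBlocks (ψ (T⁻¹ * Y * T)), Matrix.fromBlocks_multiply] at h2
    simpa using h2

/-- Degree part: the pencil polynomial has degree `d`. -/
lemma pencil_natDegree (n d : ℕ) (E A : Matrix (Fin n) (Fin n) ℝ)
    (S T : Matrix (Fin n) (Fin n) ℝ) (e : Fin n ≃ (Fin d ⊕ Fin (n - d)))
    (J : Matrix (Fin d) (Fin d) ℝ) (N : Matrix (Fin (n - d)) (Fin (n - d)) ℝ)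
    (hS : IsUnit S) (hT : IsUnit T) (hN : IsNilpotent N)
    (hE : (S * E * T).submatrix e.symm e.symm = Matrix.fromBlocks 1 0 0 N)
    (hA : (S * A * T).submatrix e.symm e.symm = Matrix.fromBlocks J 0 0 1) :
    (pencilPoly E A).natDegree = d := by
  classical
  set P : Matrix (Fin n) (Fin n) ℝ[X] :=
    (Polynomial.X : ℝ[X]) • E.map Polynomial.C - A.map Polynomial.C with hP
  have hSP : S.map C * P * T.map C
      = (X : ℝ[X]) • (S * E * T).map C - (S * A * T).map C := by
    simp only [hP, Matrix.mul_sub, Matrix.sub_mul, Matrix.mul_smul, Matrix.smul_mul,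
      ← Matrix.map_mul]
  -- the reindexed version is block diagonal
  have hblock : (S.map C * P * T.map C).submatrix e.symm e.symm
      = Matrix.fromBlocks ((X : ℝ[X]) • 1 - J.map C) 0 0 ((X : ℝ[X]) • N.map C - 1) := by
    rw [hSP]
    have hrfl : ((X:ℝ[X]) • (S*E*T).map ⇑C - (S*A*T).map ⇑C).submatrix ⇑e.symm ⇑e.symm
        = (X:ℝ[X]) • ((S*E*T).map ⇑C).submatrix ⇑e.symm ⇑e.symm
          - ((S*A*T).map ⇑C).submatrix ⇑e.symm ⇑e.symm := rfl
    rw [hrfl, Matrix.submatrix_map, Matrix.submatrix_map, hE, hA,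
      Matrix.fromBlocks_map, Matrix.fromBlocks_map, Matrix.fromBlocks_smul,
      sub_eq_add_neg, Matrix.fromBlocks_neg, Matrix.fromBlocks_add]
    congr 1 <;> simp [← sub_eq_add_neg]
  -- determinant identity
  have hdet : C S.det * (pencilPoly E A) * C T.det
      = ((X : ℝ[X]) • (1 : Matrix (Fin d) (Fin d) ℝ[X]) - J.map C).det
        * ((X : ℝ[X]) • N.map C - (1 : Matrix (Fin (n-d)) (Fin (n-d)) ℝ[X])).det := by
    have h1 : (S.map C * P * T.map C).det = C S.det * (pencilPoly E A) * C T.det := by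
      rw [Matrix.det_mul, Matrix.det_mul]
      rw [show (S.map ⇑C).det = C S.det from (RingHom.map_det C S).symm,
        show (T.map ⇑C).det = C T.det from (RingHom.map_det C T).symm]
      unfold pencilPoly
      ring
    have h2 := Matrix.det_submatrix_equiv_self e.symm (S.map C * P * T.map C)
    rw [hblock] at h2
    rw [← h1, ← h2, Matrix.det_fromBlocks_zero₂₁]
  -- the nilpotent factor's determinant is a unit polynomial
  have hNnil : IsNilpotent ((X : ℝ[X]) • N.map ⇑C) := by
    obtain ⟨j, hj⟩ := hN
    refine ⟨j, ?_⟩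
    have hmap : N.map ⇑C = (C : ℝ →+* ℝ[X]).mapMatrix N := rfl
    rw [_root_.smul_pow, hmap, ← map_pow, hj, map_zero, smul_zero]
  have huM : IsUnit ((X : ℝ[X]) • N.map ⇑C - 1) := hNnil.isUnit_sub_one
  have hu : IsUnit ((X : ℝ[X]) • N.map ⇑C - (1 : Matrix (Fin (n-d)) (Fin (n-d)) ℝ[X])).det :=
    (Matrix.isUnit_iff_isUnit_det _).mp huM
  have hu0 : ((X : ℝ[X]) • N.map ⇑C - (1 : Matrix (Fin (n-d)) (Fin (n-d)) ℝ[X])).det ≠ 0 :=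
    hu.ne_zero
  -- the other factor is the characteristic polynomial of J
  have hchar : ((X : ℝ[X]) • (1 : Matrix (Fin d) (Fin d) ℝ[X]) - J.map ⇑C).det = J.charpoly := by
    rw [Matrix.charpoly, Matrix.charmatrix]
    congr 1
    ext i j
    simp [Matrix.one_apply, apply_ite, Matrix.scalar_apply, Matrix.diagonal_apply]
  have hcp : J.charpoly ≠ 0 := J.charpoly_monic.ne_zero
  have hCS : (C S.det : ℝ[X]) ≠ 0 := by
    simpa using ((Matrix.isUnit_iff_isUnit_det S).mp hS).ne_zero
  have hCT : (C T.det : ℝ[X]) ≠ 0 := by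
    simpa using ((Matrix.isUnit_iff_isUnit_det T).mp hT).ne_zero
  rw [hchar] at hdet
  have hp : pencilPoly E A ≠ 0 := by
    intro h
    rw [h, mul_zero, zero_mul] at hdet
    exact (mul_ne_zero hcp hu0) hdet.symm
  have hnd := congrArg Polynomial.natDegree hdet
  rw [natDegree_mul (mul_ne_zero hCS hp) hCT, natDegree_mul hCS hp,
    natDegree_mul hcp hu0, natDegree_C, natDegree_C,
    Polynomial.natDegree_eq_zero_of_isUnit hu] at hnd
  simpa using hnd

/-- Well-definedness of the differentiation index: two Weierstraß-type decompositions of the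
same regular pencil have the same size `d` of the differential block and nilpotent blocks of
the same nilpotency index. -/
theorem stmt13 (n d₁ d₂ : ℕ) (E A : Matrix (Fin n) (Fin n) ℝ)
    (hreg : pencilPoly E A ≠ 0)
    (S₁ T₁ S₂ T₂ : Matrix (Fin n) (Fin n) ℝ)
    (e₁ : Fin n ≃ (Fin d₁ ⊕ Fin (n - d₁))) (e₂ : Fin n ≃ (Fin d₂ ⊕ Fin (n - d₂)))
    (J₁ : Matrix (Fin d₁) (Fin d₁) ℝ) (N₁ : Matrix (Fin (n - d₁)) (Fin (n - d₁)) ℝ)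
    (J₂ : Matrix (Fin d₂) (Fin d₂) ℝ) (N₂ : Matrix (Fin (n - d₂)) (Fin (n - d₂)) ℝ)
    (hS₁ : IsUnit S₁) (hT₁ : IsUnit T₁) (hS₂ : IsUnit S₂) (hT₂ : IsUnit T₂)
    (hN₁ : IsNilpotent N₁) (hN₂ : IsNilpotent N₂)
    (hd₁ : d₁ ≤ n) (hd₂ : d₂ ≤ n)
    (hE₁ : (S₁ * E * T₁).submatrix e₁.symm e₁.symm = Matrix.fromBlocks 1 0 0 N₁)
    (hA₁ : (S₁ * A * T₁).submatrix e₁.symm e₁.symm = Matrix.fromBlocks J₁ 0 0 1)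
    (hE₂ : (S₂ * E * T₂).submatrix e₂.symm e₂.symm = Matrix.fromBlocks 1 0 0 N₂)
    (hA₂ : (S₂ * A * T₂).submatrix e₂.symm e₂.symm = Matrix.fromBlocks J₂ 0 0 1) :
    d₁ = d₂ ∧ ∀ k : ℕ, N₁ ^ k = 0 ↔ N₂ ^ k = 0 := by
  -- choose a point `c` where the pencil polynomial does not vanish
  obtain ⟨c, hc0⟩ : ∃ c : ℝ, ¬ (pencilPoly E A).IsRoot c := by
    have hfin := Polynomial.finite_setOf_isRoot hreg
    obtain ⟨c, hcm⟩ := hfin.infinite_compl.nonempty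
    exact ⟨c, hcm⟩
  have hev : ((Polynomial.X : ℝ[X]) • E.map Polynomial.C - A.map Polynomial.C).map
      (Polynomial.eval c) = c • E - A := by
    ext i j
    simp [Matrix.map_apply, Matrix.sub_apply, Matrix.smul_apply, smul_eq_mul]
    ring
  have hdetc : (c • E - A).det = Polynomial.eval c (pencilPoly E A) := by
    have h := RingHom.map_det (Polynomial.evalRingHom c)
      ((Polynomial.X : ℝ[X]) • E.map Polynomial.C - A.map Polynomial.C)
    rw [RingHom.mapMatrix_apply] at h
    simp only [Polynomial.coe_evalRingHom] at h
    rw [hev] at h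
    exact h.symm
  have hc : IsUnit (c • E - A).det := by
    rw [hdetc]
    exact isUnit_iff_ne_zero.mpr hc0
  constructor
  · rw [← pencil_natDegree n d₁ E A S₁ T₁ e₁ J₁ N₁ hS₁ hT₁ hN₁ hE₁ hA₁,
      ← pencil_natDegree n d₂ E A S₂ T₂ e₂ J₂ N₂ hS₂ hT₂ hN₂ hE₂ hA₂]
  · intro k
    rw [pencil_index n d₁ E A c hc S₁ T₁ e₁ J₁ N₁ hS₁ hT₁ hN₁ hd₁ hE₁ hA₁ k,
      pencil_index n d₂ E A c hc S₂ T₂ e₂ J₂ N₂ hS₂ hT₂ hN₂ hd₂ hE₂ hA₂ k]
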